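/- arXiv:1403.2019 — 4 statements merged into one kernel-verified Lean document; each statement's English description precedes it below -/
import Mathlib

section
/- For every fugacity Υ > 0 and every reheating ratio R ≥ 2, the integral ∫₀^∞ (e^y + 1)/(Υ⁻¹ e^{y/R} + 1)² dy diverges (equals +∞). Equivalently, the perturbation χ(y) = f_Υ(y)/f_ch(y) does not belong to the weighted space L²((0,∞), f_ch(y) dy). -/
open MeasureTheory Real Set
open scoped ENNReal

lemma chi_aux_lb (Υ R : ℝ) (hΥ : 0 < Υ) (hR : 2 ≤ R) {y : ℝ} (hy : 0 < y) :
    (Υ⁻¹ + 1)⁻¹ ^ 2 ≤ (Real.exp y + 1) / (Υ⁻¹ * Real.exp (y / R) + 1) ^ 2 := by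
  have hΥi : 0 < Υ⁻¹ := inv_pos.mpr hΥ
  have hden : 0 < Υ⁻¹ * Real.exp (y / R) + 1 := by positivity
  have h1 : y / R ≤ y / 2 := by
    apply div_le_div_of_nonneg_left hy.le (by norm_num) hR
  have h2 : Real.exp (y / R) ≤ Real.exp (y / 2) := Real.exp_le_exp.mpr h1
  have h3 : (1 : ℝ) ≤ Real.exp (y / 2) := by
    rw [← Real.exp_zero]; exact Real.exp_le_exp.mpr (by positivity)
  have h4 : Υ⁻¹ * Real.exp (y / R) + 1 ≤ (Υ⁻¹ + 1) * Real.exp (y / 2) := by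
    rw [add_mul, one_mul]
    gcongr
  have h5 : (Υ⁻¹ * Real.exp (y / R) + 1) ^ 2 ≤ (Υ⁻¹ + 1) ^ 2 * Real.exp y := by
    calc (Υ⁻¹ * Real.exp (y / R) + 1) ^ 2 ≤ ((Υ⁻¹ + 1) * Real.exp (y / 2)) ^ 2 := by
          gcongr
      _ = (Υ⁻¹ + 1) ^ 2 * Real.exp y := by
          rw [mul_pow, ← Real.exp_nat_mul]
          congr 2
          ring
  rw [le_div_iff₀ (by positivity)]
  calc (Υ⁻¹ + 1)⁻¹ ^ 2 * (Υ⁻¹ * Real.exp (y / R) + 1) ^ 2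
      ≤ (Υ⁻¹ + 1)⁻¹ ^ 2 * ((Υ⁻¹ + 1) ^ 2 * Real.exp y) := by gcongr
    _ = Real.exp y := by
        rw [← mul_assoc, ← mul_pow, inv_mul_cancel₀ (by positivity)]; ring
    _ ≤ Real.exp y + 1 := by linarith

lemma chi_int_top (Υ R : ℝ) (hΥ : 0 < Υ) (hR : 2 ≤ R) :
    (∫⁻ y in Ioi (0:ℝ),
      ENNReal.ofReal ((Real.exp y + 1) / (Υ⁻¹ * Real.exp (y / R) + 1) ^ 2) = ⊤) := by
  have hc : (0:ℝ) < (Υ⁻¹ + 1)⁻¹ ^ 2 := by positivity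
  have hmeas : Measurable (fun y : ℝ =>
      ENNReal.ofReal ((Real.exp y + 1) / (Υ⁻¹ * Real.exp (y / R) + 1) ^ 2)) := by
    apply ENNReal.measurable_ofReal.comp
    fun_prop
  have hle : ∫⁻ y in Ioi (0:ℝ), ENNReal.ofReal ((Υ⁻¹ + 1)⁻¹ ^ 2)
      ≤ ∫⁻ y in Ioi (0:ℝ),
        ENNReal.ofReal ((Real.exp y + 1) / (Υ⁻¹ * Real.exp (y / R) + 1) ^ 2) := by
    refine setLIntegral_mono hmeas fun y hy => ?_
    exact ENNReal.ofReal_le_ofReal (chi_aux_lb Υ R hΥ hR hy)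
  rw [setLIntegral_const] at hle
  rw [eq_top_iff]
  refine le_trans (le_of_eq ?_) hle
  rw [Real.volume_Ioi, ENNReal.mul_top (by
    simp only [ne_eq, ENNReal.ofReal_eq_zero, not_le]
    positivity)]

/-- For every fugacity `Υ > 0` and reheating ratio `R ≥ 2`, the integral
`∫₀^∞ (e^y + 1)/(Υ⁻¹ e^{y/R} + 1)² dy` diverges; equivalently the perturbation
`χ = f_Υ / f_ch` is not in `L²((0,∞), f_ch(y) dy)`. -/
theorem chi_not_in_L2_of_two_le_reheating (Υ R : ℝ) (hΥ : 0 < Υ) (hR : 2 ≤ R) :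
    (∫⁻ y in Ioi (0:ℝ),
      ENNReal.ofReal ((Real.exp y + 1) / (Υ⁻¹ * Real.exp (y / R) + 1) ^ 2) = ⊤)
    ∧ ¬ MemLp
        (fun y : ℝ => (1 / (Υ⁻¹ * Real.exp (y / R) + 1)) / (1 / (Real.exp y + 1))) 2
        ((volume.restrict (Ioi (0:ℝ))).withDensity
          fun y => ENNReal.ofReal (1 / (Real.exp y + 1))) := by
  refine ⟨chi_int_top Υ R hΥ hR, fun h => ?_⟩
  set f : ℝ → ℝ := fun y => (1 / (Υ⁻¹ * Real.exp (y / R) + 1)) / (1 / (Real.exp y + 1))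
    with hf
  have hlt := h.2
  rw [eLpNorm_eq_lintegral_rpow_enorm_toReal (by norm_num) (by norm_num)] at hlt
  simp only [ENNReal.toReal_ofNat, enorm_eq_nnnorm] at hlt
  have hlt2 : ∫⁻ y, (‖f y‖₊ : ℝ≥0∞) ^ (2:ℝ)
      ∂((volume.restrict (Ioi (0:ℝ))).withDensity
          fun y => ENNReal.ofReal (1 / (Real.exp y + 1))) < ⊤ := by
    by_contra hc
    push_neg at hc
    rw [top_le_iff.mp hc] at hlt
    simp at hlt
  rw [lintegral_withDensity_eq_lintegral_mul _ (by fun_prop) (by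
      apply Measurable.pow_const
      apply measurable_coe_nnreal_ennreal.comp
      apply Measurable.nnnorm
      fun_prop)] at hlt2
  have key : ∀ y ∈ Ioi (0:ℝ),
      (ENNReal.ofReal (1 / (Real.exp y + 1)) * (‖f y‖₊ : ℝ≥0∞) ^ (2:ℝ))
      = ENNReal.ofReal ((Real.exp y + 1) / (Υ⁻¹ * Real.exp (y / R) + 1) ^ 2) := by
    intro y hy
    have hden : 0 < Υ⁻¹ * Real.exp (y / R) + 1 := by positivity
    have hey : 0 < Real.exp y + 1 := by positivity
    have hfy : 0 ≤ f y := by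
      apply div_nonneg <;> positivity
    have : (‖f y‖₊ : ℝ≥0∞) = ENNReal.ofReal (f y) := by
      rw [← enorm_eq_nnnorm, ← ofReal_norm_eq_enorm, Real.norm_of_nonneg hfy]
    rw [this, ENNReal.ofReal_rpow_of_nonneg hfy (by norm_num : (0:ℝ) ≤ 2),
      ← ENNReal.ofReal_mul (by positivity)]
    congr 1
    rw [show ((2:ℝ)) = ((2:ℕ):ℝ) by norm_num, Real.rpow_natCast]
    rw [hf]
    field_simp
  simp only [Pi.mul_apply] at hlt2
  rw [setLIntegral_congr_fun measurableSet_Ioi key,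
    chi_int_top Υ R hΥ hR] at hlt2
  exact absurd hlt2 (by simp)
end

section
/- Let a, T, T_eq: [0,∞) → (0,∞) be C¹, let Υ > 0, and set H(t) = a'(t)/a(t). Define f(z,t) = ∫₀ᵗ e^{s−t}/(Υ⁻¹ exp(a(t)T(t)z/(a(s)T_eq(s))) + 1) ds + e^{−t}/(exp(a(t)T(t)z/(a(0)T_eq(0))) + 1) for z > 0, t ≥ 0. Then f satisfies the partial differential equation ∂ₜ f(z,t) − z(H(t) + T'(t)/T(t)) ∂_z f(z,t) = 1/(Υ⁻¹ e^{zT(t)/T_eq(t)} + 1) − f(z,t), with initial condition f(z,0) = 1/(e^{zT(0)/T_eq(0)} + 1). -/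
open MeasureTheory Real Set

noncomputable def Ifun (a Teq : ℝ → ℝ) (Υ : ℝ) (t w : ℝ) : ℝ :=
  ∫ s in (0:ℝ)..t, Real.exp s * (Υ⁻¹ * Real.exp (w / (a s * Teq s)) + 1)⁻¹

noncomputable def Ifun' (a Teq : ℝ → ℝ) (Υ : ℝ) (t w : ℝ) : ℝ :=
  ∫ s in (0:ℝ)..t, Real.exp s * (-(Υ⁻¹ * (Real.exp (w / (a s * Teq s)) * (a s * Teq s)⁻¹)) /
    (Υ⁻¹ * Real.exp (w / (a s * Teq s)) + 1) ^ 2)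

lemma cont_integrand (a Teq : ℝ → ℝ) (Υ : ℝ) (haC : Continuous a) (hTeqC : Continuous Teq)
    (hapos : ∀ s, 0 < a s) (hTeqpos : ∀ s, 0 < Teq s) (hΥ : 0 < Υ) (w : ℝ) :
    Continuous fun s => Real.exp s * (Υ⁻¹ * Real.exp (w / (a s * Teq s)) + 1)⁻¹ := by
  have hdne : ∀ s, a s * Teq s ≠ 0 := fun s => (mul_pos (hapos s) (hTeqpos s)).ne'
  have hdenpos : ∀ s : ℝ, 0 < Υ⁻¹ * Real.exp (w / (a s * Teq s)) + 1 := fun s =>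
    add_pos_of_nonneg_of_pos (le_of_lt (mul_pos (inv_pos.2 hΥ) (exp_pos _))) one_pos
  exact Real.continuous_exp.mul
    (((continuous_const.mul (Real.continuous_exp.comp
        (continuous_const.div (haC.mul hTeqC) hdne))).add continuous_const).inv₀
      fun s => (hdenpos s).ne')

lemma hasDerivAt_param (d : ℝ → ℝ) (hd : Continuous d) (hdpos : ∀ s, 0 < d s)
    (Υ : ℝ) (hΥ : 0 < Υ) (t w₀ : ℝ) :
    HasDerivAt (fun w => ∫ s in (0:ℝ)..t,
        Real.exp s * (Υ⁻¹ * Real.exp (w / d s) + 1)⁻¹)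
      (∫ s in (0:ℝ)..t,
        Real.exp s * (-(Υ⁻¹ * (Real.exp (w₀ / d s) * (d s)⁻¹)) /
          (Υ⁻¹ * Real.exp (w₀ / d s) + 1) ^ 2)) w₀ := by
  have hdne : ∀ s, d s ≠ 0 := fun s => (hdpos s).ne'
  have hden : ∀ x : ℝ, Continuous fun s => Υ⁻¹ * Real.exp (x / d s) + 1 := fun x =>
    (continuous_const.mul (Real.continuous_exp.comp (continuous_const.div hd hdne))).add
      continuous_const
  have hdenpos : ∀ (x s : ℝ), 0 < Υ⁻¹ * Real.exp (x / d s) + 1 := fun x s =>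
    add_pos_of_nonneg_of_pos (le_of_lt (mul_pos (inv_pos.2 hΥ) (exp_pos _))) one_pos
  have hF_cont : ∀ x : ℝ, Continuous fun s => Real.exp s * (Υ⁻¹ * Real.exp (x / d s) + 1)⁻¹ :=
    fun x => Real.continuous_exp.mul ((hden x).inv₀ fun s => (hdenpos x s).ne')
  have hF'_cont : Continuous fun s =>
      Real.exp s * (-(Υ⁻¹ * (Real.exp (w₀ / d s) * (d s)⁻¹)) /
        (Υ⁻¹ * Real.exp (w₀ / d s) + 1) ^ 2) :=
    Real.continuous_exp.mul
      (((continuous_const.mul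
          ((Real.continuous_exp.comp (continuous_const.div hd hdne)).mul (hd.inv₀ hdne))).neg).div
        ((hden w₀).pow 2) fun s => pow_ne_zero 2 (hdenpos w₀ s).ne')
  have key : ∀ x s : ℝ,
      ‖Real.exp s * (-(Υ⁻¹ * (Real.exp (x / d s) * (d s)⁻¹)) /
        (Υ⁻¹ * Real.exp (x / d s) + 1) ^ 2)‖ ≤ Real.exp s * (d s)⁻¹ := by
    intro x s
    have hXpos : 0 < Υ⁻¹ * Real.exp (x / d s) := mul_pos (inv_pos.2 hΥ) (exp_pos _)
    have hd0 : 0 < (d s)⁻¹ := inv_pos.2 (hdpos s)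
    rw [Real.norm_eq_abs, abs_mul, abs_of_nonneg (exp_pos s).le]
    refine mul_le_mul_of_nonneg_left ?_ (exp_pos s).le
    have hA : -(Υ⁻¹ * (Real.exp (x / d s) * (d s)⁻¹)) /
        (Υ⁻¹ * Real.exp (x / d s) + 1) ^ 2 ≤ 0 := by
      apply div_nonpos_of_nonpos_of_nonneg
      · nlinarith
      · positivity
    rw [abs_of_nonpos hA, neg_div, neg_neg, div_le_iff₀ (by positivity)]
    have hXle : Υ⁻¹ * Real.exp (x / d s) ≤ (Υ⁻¹ * Real.exp (x / d s) + 1) ^ 2 := by nlinarith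
    calc Υ⁻¹ * (Real.exp (x / d s) * (d s)⁻¹)
        = (Υ⁻¹ * Real.exp (x / d s)) * (d s)⁻¹ := by ring
      _ ≤ (Υ⁻¹ * Real.exp (x / d s) + 1) ^ 2 * (d s)⁻¹ := mul_le_mul_of_nonneg_right hXle hd0.le
      _ = (d s)⁻¹ * (Υ⁻¹ * Real.exp (x / d s) + 1) ^ 2 := by ring
  have hdiff : ∀ (s x : ℝ),
      HasDerivAt (fun w => Real.exp s * (Υ⁻¹ * Real.exp (w / d s) + 1)⁻¹)
        (Real.exp s * (-(Υ⁻¹ * (Real.exp (x / d s) * (d s)⁻¹)) /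
          (Υ⁻¹ * Real.exp (x / d s) + 1) ^ 2)) x := by
    intro s x
    have h1 : HasDerivAt (fun w : ℝ => w / d s) ((d s)⁻¹) x := by
      simpa [one_div] using (hasDerivAt_id x).div_const (d s)
    exact (((h1.exp.const_mul Υ⁻¹).add_const 1).inv (hdenpos x s).ne').const_mul (Real.exp s)
  have := intervalIntegral.hasDerivAt_integral_of_dominated_loc_of_deriv_le
    (μ := volume) (a := 0) (b := t) (x₀ := w₀)
    (bound := fun s => Real.exp s * (d s)⁻¹) (s := Metric.ball w₀ 1) (Metric.ball_mem_nhds w₀ one_pos)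
    (Filter.Eventually.of_forall fun x => (hF_cont x).aestronglyMeasurable)
    ((hF_cont w₀).intervalIntegrable 0 t)
    hF'_cont.aestronglyMeasurable
    (MeasureTheory.ae_of_all _ fun s hs x hx => key x s)
    ((Real.continuous_exp.mul (hd.inv₀ hdne)).intervalIntegrable 0 t)
    (MeasureTheory.ae_of_all _ fun s hs x hx => hdiff s x)
  exact this.2

lemma hasDerivAt_endpoint (g : ℝ → ℝ → ℝ)
    (hg : Continuous fun p : ℝ × ℝ => g p.1 p.2) (t₀ : ℝ) :
    HasDerivAt (fun τ => ∫ s in t₀..τ, g τ s) (g t₀ t₀) t₀ := by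
  rw [hasDerivAt_iff_isLittleO]
  rw [Asymptotics.isLittleO_iff]
  intro ε hε
  have hc : ContinuousAt (fun p : ℝ × ℝ => g p.1 p.2) (t₀, t₀) := hg.continuousAt
  rw [Metric.continuousAt_iff] at hc
  obtain ⟨δ, hδ, hball⟩ := hc ε hε
  filter_upwards [Metric.ball_mem_nhds t₀ hδ] with τ hτ
  have hτδ : |τ - t₀| < δ := by simpa [Real.dist_eq] using hτ
  have hgc : ∀ τ', Continuous fun s => g τ' s := fun τ' =>
    hg.comp (continuous_const.prodMk continuous_id)
  have hint : IntervalIntegrable (fun s => g τ s) volume t₀ τ :=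
    (hgc τ).intervalIntegrable _ _
  have hsub : (∫ s in t₀..τ, g τ s) - (∫ s in t₀..t₀, g t₀ s) - (τ - t₀) • g t₀ t₀
      = ∫ s in t₀..τ, (g τ s - g t₀ t₀) := by
    rw [intervalIntegral.integral_same, intervalIntegral.integral_sub hint
      (intervalIntegrable_const), intervalIntegral.integral_const]
    simp [smul_eq_mul]
  rw [hsub]
  have hbd : ∀ s ∈ Set.uIoc t₀ τ, ‖g τ s - g t₀ t₀‖ ≤ ε := by
    intro s hs
    have hs' : |s - t₀| ≤ |τ - t₀| := by
      rcases le_total t₀ τ with h | h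
      · rw [uIoc_of_le h] at hs
        rw [abs_of_nonneg (by linarith [hs.1]), abs_of_nonneg (by linarith)]
        linarith [hs.2]
      · rw [uIoc_of_ge h] at hs
        rw [abs_of_nonpos (by linarith [hs.2]), abs_of_nonpos (by linarith)]
        linarith [hs.1]
    have : dist ((τ, s) : ℝ × ℝ) (t₀, t₀) < δ := by
      rw [Prod.dist_eq]
      simp only [Real.dist_eq]
      exact max_lt hτδ (lt_of_le_of_lt hs' hτδ)
    have := hball this
    rw [Real.dist_eq] at this
    exact le_of_lt this
  calc ‖∫ s in t₀..τ, (g τ s - g t₀ t₀)‖ ≤ ε * |τ - t₀| :=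
        intervalIntegral.norm_integral_le_of_norm_le_const hbd
    _ = ε * ‖τ - t₀‖ := by rw [Real.norm_eq_abs]

lemma hasDerivAt_diag (a T Teq : ℝ → ℝ) (Υ : ℝ)
    (ha : ContDiff ℝ 1 a) (hT : ContDiff ℝ 1 T) (hTeqC : Continuous Teq)
    (hapos : ∀ s, 0 < a s) (hTeqpos : ∀ s, 0 < Teq s) (hΥ : 0 < Υ) (z t₀ : ℝ) :
    HasDerivAt (fun τ => Ifun a Teq Υ τ (a τ * T τ * z))
      (Real.exp t₀ * (Υ⁻¹ * Real.exp (a t₀ * T t₀ * z / (a t₀ * Teq t₀)) + 1)⁻¹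
        + Ifun' a Teq Υ t₀ (a t₀ * T t₀ * z)
          * ((deriv a t₀ * T t₀ + a t₀ * deriv T t₀) * z)) t₀ := by
  have haC : Continuous a := ha.continuous
  have hTC : Continuous T := hT.continuous
  have hdne : ∀ s, a s * Teq s ≠ 0 := fun s => (mul_pos (hapos s) (hTeqpos s)).ne'
  have hdenpos : ∀ x s : ℝ, 0 < Υ⁻¹ * Real.exp (x / (a s * Teq s)) + 1 := fun x s =>
    add_pos_of_nonneg_of_pos (le_of_lt (mul_pos (inv_pos.2 hΥ) (exp_pos _))) one_pos
  set g : ℝ → ℝ → ℝ := fun τ s =>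
    Real.exp s * (Υ⁻¹ * Real.exp (a τ * T τ * z / (a s * Teq s)) + 1)⁻¹ with hgdef
  have hgjoint : Continuous fun p : ℝ × ℝ => g p.1 p.2 := by
    apply (Real.continuous_exp.comp continuous_snd).mul
    apply Continuous.inv₀
    · exact (continuous_const.mul (Real.continuous_exp.comp
        ((((haC.comp continuous_fst).mul (hTC.comp continuous_fst)).mul continuous_const).div
          ((haC.comp continuous_snd).mul (hTeqC.comp continuous_snd))
          fun p => hdne p.2))).add continuous_const
    · exact fun p => (hdenpos _ p.2).ne'
  have hsplit : (fun τ => Ifun a Teq Υ τ (a τ * T τ * z)) =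
      fun τ => (∫ s in t₀..τ, g τ s) + Ifun a Teq Υ t₀ (a τ * T τ * z) := by
    funext τ
    have h1 : IntervalIntegrable (fun s => g τ s) volume 0 t₀ :=
      (cont_integrand a Teq Υ haC hTeqC hapos hTeqpos hΥ _).intervalIntegrable 0 t₀
    have h2 : IntervalIntegrable (fun s => g τ s) volume t₀ τ :=
      (cont_integrand a Teq Υ haC hTeqC hapos hTeqpos hΥ _).intervalIntegrable t₀ τ
    have := intervalIntegral.integral_add_adjacent_intervals h1 h2
    unfold Ifun
    rw [hgdef]
    dsimp only
    rw [← this]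
    ring
  rw [hsplit]
  have hc : HasDerivAt (fun τ => a τ * T τ * z)
      ((deriv a t₀ * T t₀ + a t₀ * deriv T t₀) * z) t₀ :=
    (((ha.differentiable one_ne_zero t₀).hasDerivAt.mul
      (hT.differentiable one_ne_zero t₀).hasDerivAt)).mul_const z
  have hIp := hasDerivAt_param (fun s => a s * Teq s) (haC.mul hTeqC)
    (fun s => mul_pos (hapos s) (hTeqpos s)) Υ hΥ t₀ (a t₀ * T t₀ * z)
  have hcomp : HasDerivAt (fun τ => Ifun a Teq Υ t₀ (a τ * T τ * z))
      (Ifun' a Teq Υ t₀ (a t₀ * T t₀ * z)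
        * ((deriv a t₀ * T t₀ + a t₀ * deriv T t₀) * z)) t₀ := by
    have := hIp.comp t₀ hc
    simpa [Ifun, Ifun', Function.comp_def] using this
  exact (hasDerivAt_endpoint g hgjoint t₀).add hcomp

noncomputable def Bfun (a Teq : ℝ → ℝ) (w : ℝ) : ℝ := (Real.exp (w / (a 0 * Teq 0)) + 1)⁻¹

lemma hasDerivAt_Bfun (a Teq : ℝ → ℝ) (w₀ : ℝ) :
    HasDerivAt (Bfun a Teq)
      (-(Real.exp (w₀ / (a 0 * Teq 0)) * (a 0 * Teq 0)⁻¹) /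
        (Real.exp (w₀ / (a 0 * Teq 0)) + 1) ^ 2) w₀ := by
  have h1 : HasDerivAt (fun w : ℝ => w / (a 0 * Teq 0)) ((a 0 * Teq 0)⁻¹) w₀ := by
    simpa [one_div] using (hasDerivAt_id w₀).div_const (a 0 * Teq 0)
  have hpos : Real.exp (w₀ / (a 0 * Teq 0)) + 1 ≠ 0 := by positivity
  exact (h1.exp.add_const 1).inv hpos

/-- The explicit function
`f(z,t) = ∫₀ᵗ e^{s−t}/(Υ⁻¹ exp(a(t)T(t)z/(a(s)T_eq(s))) + 1) ds
          + e^{−t}/(exp(a(t)T(t)z/(a(0)T_eq(0))) + 1)`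
satisfies the model relaxation Boltzmann equation in the variable `z = p/T(t)`:
`∂ₜf − z(H + Ṫ/T)∂_z f = 1/(Υ⁻¹ e^{zT/T_eq} + 1) − f`, with
`f(z,0) = 1/(e^{zT(0)/T_eq(0)} + 1)`, where `H = ȧ/a`. -/
theorem model_relaxation_in_scaled_momentum
    (a T Teq : ℝ → ℝ) (Υ : ℝ)
    (ha : ContDiff ℝ 1 a) (hT : ContDiff ℝ 1 T) (hTeq : ContDiff ℝ 1 Teq)
    (hapos : ∀ t, 0 < a t) (hTpos : ∀ t, 0 < T t) (hTeqpos : ∀ t, 0 < Teq t)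
    (hΥ : 0 < Υ)
    (f : ℝ → ℝ → ℝ)
    (hf : ∀ z t, f z t =
      (∫ s in (0:ℝ)..t,
        Real.exp (s - t) / (Υ⁻¹ * Real.exp (a t * T t * z / (a s * Teq s)) + 1))
      + Real.exp (-t) / (Real.exp (a t * T t * z / (a 0 * Teq 0)) + 1)) :
    (∀ z : ℝ, 0 < z → ∀ t : ℝ, 0 ≤ t →
      deriv (fun τ => f z τ) t
        - z * (deriv a t / a t + deriv T t / T t) * deriv (fun ζ => f ζ t) z
      = 1 / (Υ⁻¹ * Real.exp (z * T t / Teq t) + 1) - f z t)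
    ∧ (∀ z : ℝ, 0 < z → f z 0 = 1 / (Real.exp (z * T 0 / Teq 0) + 1)) := by
  have haC : Continuous a := ha.continuous
  have hTC : Continuous T := hT.continuous
  have hTeqC : Continuous Teq := hTeq.continuous
  have hf2 : ∀ z t, f z t = Real.exp (-t) *
      (Ifun a Teq Υ t (a t * T t * z) + Bfun a Teq (a t * T t * z)) := by
    intro z t
    rw [hf z t, mul_add]
    congr 1
    · unfold Ifun
      rw [← intervalIntegral.integral_const_mul]
      apply intervalIntegral.integral_congr
      intro s hs
      dsimp only
      rw [div_eq_mul_inv,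
        show Real.exp (s - t) = Real.exp (-t) * Real.exp s by rw [← Real.exp_add]; ring_nf]
      rw [mul_assoc]
  constructor
  · intro z hz t ht
    have hane : a t ≠ 0 := (hapos t).ne'
    have hTne : T t ≠ 0 := (hTpos t).ne'
    have hTeqne : Teq t ≠ 0 := (hTeqpos t).ne'
    have hc : HasDerivAt (fun τ => a τ * T τ * z)
        ((deriv a t * T t + a t * deriv T t) * z) t :=
      (((ha.differentiable one_ne_zero t).hasDerivAt.mul
        (hT.differentiable one_ne_zero t).hasDerivAt)).mul_const z
    -- time derivative
    have hKt := hasDerivAt_diag a T Teq Υ ha hT hTeqC hapos hTeqpos hΥ z t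
    have hBt : HasDerivAt (fun τ => Bfun a Teq (a τ * T τ * z))
        ((-(Real.exp (a t * T t * z / (a 0 * Teq 0)) * (a 0 * Teq 0)⁻¹) /
          (Real.exp (a t * T t * z / (a 0 * Teq 0)) + 1) ^ 2)
          * ((deriv a t * T t + a t * deriv T t) * z)) t := by
      have := (hasDerivAt_Bfun a Teq (a t * T t * z)).comp t hc
      simpa [Function.comp_def] using this
    have hexp : HasDerivAt (fun τ => Real.exp (-τ)) (-Real.exp (-t)) t := by
      simpa using ((hasDerivAt_id t).neg).exp
    have hft : HasDerivAt (fun τ => f z τ)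
        (-Real.exp (-t) * (Ifun a Teq Υ t (a t * T t * z) + Bfun a Teq (a t * T t * z))
          + Real.exp (-t) *
            ((Real.exp t * (Υ⁻¹ * Real.exp (a t * T t * z / (a t * Teq t)) + 1)⁻¹
              + Ifun' a Teq Υ t (a t * T t * z) * ((deriv a t * T t + a t * deriv T t) * z))
            + (-(Real.exp (a t * T t * z / (a 0 * Teq 0)) * (a 0 * Teq 0)⁻¹) /
                (Real.exp (a t * T t * z / (a 0 * Teq 0)) + 1) ^ 2)
              * ((deriv a t * T t + a t * deriv T t) * z))) t := by
      rw [show (fun τ => f z τ) = fun τ => Real.exp (-τ) *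
        (Ifun a Teq Υ τ (a τ * T τ * z) + Bfun a Teq (a τ * T τ * z)) from
        funext fun τ => hf2 z τ]
      exact hexp.mul (hKt.add hBt)
    -- z derivative
    have hlin : HasDerivAt (fun ζ => a t * T t * ζ) (a t * T t) z := by
      simpa using (hasDerivAt_id z).const_mul (a t * T t)
    have hIp := hasDerivAt_param (fun s => a s * Teq s) (haC.mul hTeqC)
      (fun s => mul_pos (hapos s) (hTeqpos s)) Υ hΥ t (a t * T t * z)
    have hIz : HasDerivAt (fun ζ => Ifun a Teq Υ t (a t * T t * ζ))
        (Ifun' a Teq Υ t (a t * T t * z) * (a t * T t)) z := by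
      have := hIp.comp z hlin
      simpa [Ifun, Ifun', Function.comp_def] using this
    have hBz : HasDerivAt (fun ζ => Bfun a Teq (a t * T t * ζ))
        ((-(Real.exp (a t * T t * z / (a 0 * Teq 0)) * (a 0 * Teq 0)⁻¹) /
          (Real.exp (a t * T t * z / (a 0 * Teq 0)) + 1) ^ 2) * (a t * T t)) z := by
      have := (hasDerivAt_Bfun a Teq (a t * T t * z)).comp z hlin
      simpa [Function.comp_def] using this
    have hfz : HasDerivAt (fun ζ => f ζ t)
        (Real.exp (-t) * (Ifun' a Teq Υ t (a t * T t * z) * (a t * T t)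
          + (-(Real.exp (a t * T t * z / (a 0 * Teq 0)) * (a 0 * Teq 0)⁻¹) /
            (Real.exp (a t * T t * z / (a 0 * Teq 0)) + 1) ^ 2) * (a t * T t))) z := by
      rw [show (fun ζ => f ζ t) = fun ζ => Real.exp (-t) *
        (Ifun a Teq Υ t (a t * T t * ζ) + Bfun a Teq (a t * T t * ζ)) from
        funext fun ζ => hf2 ζ t]
      exact (hIz.add hBz).const_mul (Real.exp (-t))
    rw [hft.deriv, hfz.deriv, hf2 z t]
    have harg : a t * T t * z / (a t * Teq t) = z * T t / Teq t := by
      field_simp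
    rw [harg]
    have hexpt : Real.exp (-t) * Real.exp t = 1 := by
      rw [← Real.exp_add]; simp
    have hVne : Υ⁻¹ * Real.exp (z * T t / Teq t) + 1 ≠ 0 :=
      (add_pos_of_nonneg_of_pos (le_of_lt (mul_pos (inv_pos.2 hΥ) (exp_pos _))) one_pos).ne'
    set Q := Ifun' a Teq Υ t (a t * T t * z)
    set I := Ifun a Teq Υ t (a t * T t * z)
    set B := Bfun a Teq (a t * T t * z)
    set P := -(Real.exp (a t * T t * z / (a 0 * Teq 0)) * (a 0 * Teq 0)⁻¹) /
      (Real.exp (a t * T t * z / (a 0 * Teq 0)) + 1) ^ 2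
    rw [one_div, Real.exp_neg]
    have hE : Real.exp (-t) * (Real.exp t *
        (Υ⁻¹ * Real.exp (z * T t / Teq t) + 1)⁻¹) =
        (Υ⁻¹ * Real.exp (z * T t / Teq t) + 1)⁻¹ := by
      rw [← mul_assoc, hexpt, one_mul]
    field_simp
    ring
  · intro z hz
    rw [hf z 0, intervalIntegral.integral_same,
      show a 0 * T 0 * z / (a 0 * Teq 0) = z * T 0 / Teq 0 from by
        field_simp [(hapos 0).ne', (hTeqpos 0).ne']]
    simp
end

section
/- Fix Υ > 0, let f_Υ(z) = 1/(Υ⁻¹eᶻ + 1), w(z) = z² f_Υ(z) on (0,∞), and let ⟨h₁,h₂⟩ = ∫₀^∞ h₁h₂ w dz. (i) For any polynomials p, q, the integration-by-parts identity holds: ∫₀^∞ z f_Υ'(z) p(z) q(z) z² dz + ⟨z p', q⟩ = −3⟨p,q⟩ − ⟨p, z q'⟩. (ii) Consequently, if (ψ̂_i)_i are orthonormal polynomials for this inner product with deg ψ̂_i = i, then the matrix A^k_i = ⟨(z/f_Υ)(∂_z f_Υ) ψ̂_i, ψ̂_k⟩ + ⟨z ∂_z ψ̂_i, ψ̂_k⟩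 satisfies A^k_i = −3⟨ψ̂_i,ψ̂_k⟩ − ⟨ψ̂_i, z ∂_z ψ̂_k⟩, and A^k_i = 0 whenever k < i (A is lower triangular). -/
open MeasureTheory Real Set Polynomial

section helpers
open Filter Asymptotics

private lemma tendsto_poly_mul_exp_neg' (Q : Polynomial ℝ) {c : ℝ} (hc : 0 < c) :
    Filter.Tendsto (fun z => Q.eval z * Real.exp (-(c * z))) Filter.atTop (nhds 0) := by
  have h1 : Filter.Tendsto (fun z : ℝ => c * z) Filter.atTop Filter.atTop :=
    Filter.Tendsto.const_mul_atTop hc Filter.tendsto_id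
  have h2 := ((Q.comp (Polynomial.C c⁻¹ * Polynomial.X)).tendsto_div_exp_atTop).comp h1
  refine h2.congr fun z => ?_
  simp only [Function.comp, Polynomial.eval_comp, Polynomial.eval_mul, Polynomial.eval_C,
    Polynomial.eval_X, Real.exp_neg, div_eq_mul_inv]
  rw [← mul_assoc, inv_mul_cancel₀ hc.ne', one_mul]

private lemma integrable_poly_mul' (Υ : ℝ) (hΥ : 0 < Υ) (Q : Polynomial ℝ) (g : ℝ → ℝ)
    (hg : Continuous g) (hb : ∀ z, |g z| ≤ Υ * Real.exp (-z)) :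
    IntegrableOn (fun z => Q.eval z * g z) (Ioi (0:ℝ)) := by
  apply integrable_of_isBigO_exp_neg (b := 2⁻¹) (by norm_num)
    ((Q.continuous.mul hg).continuousOn)
  rw [Asymptotics.isBigO_iff]
  refine ⟨1, ?_⟩
  have h := tendsto_poly_mul_exp_neg' (Polynomial.C Υ * Q) (c := 2⁻¹) (by norm_num)
  have h1 : ∀ᶠ z in Filter.atTop, |((Polynomial.C Υ * Q).eval z * Real.exp (-(2⁻¹*z)))| < 1 := by
    have := Metric.tendsto_nhds.mp h 1 one_pos
    filter_upwards [this] with z hz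
    rw [Real.dist_eq, sub_zero] at hz
    exact hz
  filter_upwards [h1] with z hz
  have e1 : Real.exp (-z) = Real.exp (-(2⁻¹*z)) * Real.exp (-(2⁻¹*z)) := by
    rw [← Real.exp_add]; ring_nf
  have hq : |Q.eval z * g z| ≤ |Υ * Q.eval z * Real.exp (-(2⁻¹*z))| * Real.exp (-(2⁻¹*z)) := by
    rw [abs_mul]
    calc |Q.eval z| * |g z| ≤ |Q.eval z| * (Υ * Real.exp (-z)) :=
          mul_le_mul_of_nonneg_left (hb z) (abs_nonneg _)
      _ = |Υ * Q.eval z * Real.exp (-(2⁻¹*z))| * Real.exp (-(2⁻¹*z)) := by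
          rw [e1, abs_mul, abs_mul, abs_of_pos hΥ, abs_of_pos (Real.exp_pos _)]
          ring
  simp only [Real.norm_eq_abs, abs_of_pos (Real.exp_pos _), neg_mul]
  calc |Q.eval z * g z| ≤ |Υ * Q.eval z * Real.exp (-(2⁻¹*z))| * Real.exp (-(2⁻¹*z)) := hq
    _ ≤ 1 * Real.exp (-(2⁻¹ * z)) := by
        apply mul_le_mul_of_nonneg_right _ (Real.exp_pos _).le
        calc |Υ * Q.eval z * Real.exp (-(2⁻¹*z))|
            = |(Polynomial.C Υ * Q).eval z * Real.exp (-(2⁻¹*z))| := by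
              simp [Polynomial.eval_mul]
          _ ≤ 1 := hz.le

end helpers

/-- (i) Integration by parts for the chemical non-equilibrium weight
`w(z) = z²f_Υ(z)`, `f_Υ(z) = 1/(Υ⁻¹eᶻ+1)`:
`∫₀^∞ z f_Υ' p q z² dz + ⟨zp', q⟩ = −3⟨p,q⟩ − ⟨p, zq'⟩` for all polynomials `p, q`.
(ii) Consequently the matrix `A^k_i = ⟨(z/f_Υ)(∂_zf_Υ)ψ̂_i, ψ̂_k⟩ + ⟨z∂_zψ̂_i, ψ̂_k⟩`
satisfies `A^k_i = −3⟨ψ̂_i,ψ̂_k⟩ − ⟨ψ̂_i, z∂_zψ̂_k⟩` and is lower triangular. -/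
theorem A_matrix_integration_by_parts_and_lower_triangularity
    (Υ : ℝ) (hΥ : 0 < Υ)
    (fΥ w : ℝ → ℝ)
    (hfΥ : ∀ z, fΥ z = (Υ⁻¹ * Real.exp z + 1)⁻¹)
    (hw : ∀ z, w z = z ^ 2 * fΥ z)
    (ψ : ℕ → Polynomial ℝ)
    (hdeg : ∀ i, (ψ i).degree = (i : ℕ))
    (horth : ∀ i j, (∫ z in Ioi (0:ℝ), (ψ i).eval z * (ψ j).eval z * w z)
      = if i = j then 1 else 0)
    (A : ℕ → ℕ → ℝ)
    (hA : ∀ k i, A k i =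
      (∫ z in Ioi (0:ℝ),
        (z / fΥ z * deriv fΥ z * (ψ i).eval z) * (ψ k).eval z * w z)
      + ∫ z in Ioi (0:ℝ),
        (z * (Polynomial.derivative (ψ i)).eval z) * (ψ k).eval z * w z) :
    (∀ p q : Polynomial ℝ,
      (∫ z in Ioi (0:ℝ), z * deriv fΥ z * p.eval z * q.eval z * z ^ 2)
        + (∫ z in Ioi (0:ℝ),
            (z * (Polynomial.derivative p).eval z) * q.eval z * w z)
      = -3 * (∫ z in Ioi (0:ℝ), p.eval z * q.eval z * w z)
        - ∫ z in Ioi (0:ℝ),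
            p.eval z * (z * (Polynomial.derivative q).eval z) * w z)
    ∧ (∀ k i : ℕ,
        A k i
          = -3 * (∫ z in Ioi (0:ℝ), (ψ i).eval z * (ψ k).eval z * w z)
            - ∫ z in Ioi (0:ℝ),
                (ψ i).eval z * (z * (Polynomial.derivative (ψ k)).eval z) * w z)
    ∧ (∀ k i : ℕ, k < i → A k i = 0) := by
  -- basic positivity and continuity facts
  have hden : ∀ z : ℝ, 0 < Υ⁻¹ * Real.exp z + 1 := fun z => by positivity
  have hfpos : ∀ z, 0 < fΥ z := fun z => by rw [hfΥ]; positivity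
  have hfun : fΥ = fun z => (Υ⁻¹ * Real.exp z + 1)⁻¹ := funext hfΥ
  have hcontf : Continuous fΥ := by
    rw [hfun]
    exact ((continuous_const.mul Real.continuous_exp).add continuous_const).inv₀ fun z => (hden z).ne'
  have hdf : ∀ z, HasDerivAt fΥ (-(Υ⁻¹ * Real.exp z) / (Υ⁻¹ * Real.exp z + 1) ^ 2) z := by
    intro z
    rw [hfun]
    exact (((Real.hasDerivAt_exp z).const_mul Υ⁻¹).add_const 1).inv (hden z).ne'
  have hderiv_eq : ∀ z, deriv fΥ z = -(Υ⁻¹ * Real.exp z) / (Υ⁻¹ * Real.exp z + 1) ^ 2 :=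
    fun z => (hdf z).deriv
  have hcontd : Continuous (deriv fΥ) := by
    have h : deriv fΥ = fun z => -(Υ⁻¹ * Real.exp z) / (Υ⁻¹ * Real.exp z + 1) ^ 2 :=
      funext hderiv_eq
    rw [h]
    exact (continuous_const.mul Real.continuous_exp).neg.div
      (((continuous_const.mul Real.continuous_exp).add continuous_const).pow 2)
      fun z => pow_ne_zero 2 (hden z).ne'
  -- bounds
  have hf_le : ∀ z, fΥ z ≤ Υ * Real.exp (-z) := by
    intro z
    rw [hfΥ, Real.exp_neg, show Υ * (Real.exp z)⁻¹ = (Υ⁻¹ * Real.exp z)⁻¹ by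
      rw [mul_inv, inv_inv]]
    exact inv_anti₀ (by positivity) (by linarith)
  have hbf : ∀ z, |fΥ z| ≤ Υ * Real.exp (-z) := fun z => by
    rw [abs_of_pos (hfpos z)]; exact hf_le z
  have hd_le : ∀ z, |deriv fΥ z| ≤ Υ * Real.exp (-z) := by
    intro z
    rw [hderiv_eq]
    have h0 : 0 < Υ⁻¹ * Real.exp z := by positivity
    rw [abs_div, abs_neg, abs_of_pos h0, abs_of_pos (pow_pos (hden z) 2)]
    have step1 : (Υ⁻¹ * Real.exp z) / (Υ⁻¹ * Real.exp z + 1) ^ 2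
        ≤ (Υ⁻¹ * Real.exp z) / ((Υ⁻¹ * Real.exp z) * (Υ⁻¹ * Real.exp z + 1)) := by
      apply div_le_div_of_nonneg_left h0.le (by positivity)
      nlinarith [hden z, h0]
    have step2 : (Υ⁻¹ * Real.exp z) / ((Υ⁻¹ * Real.exp z) * (Υ⁻¹ * Real.exp z + 1))
        = (Υ⁻¹ * Real.exp z + 1)⁻¹ := by
      rw [← div_div, div_self h0.ne', one_div]
    calc (Υ⁻¹ * Real.exp z) / (Υ⁻¹ * Real.exp z + 1) ^ 2
        ≤ (Υ⁻¹ * Real.exp z + 1)⁻¹ := by rw [← step2]; exact step1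
      _ = fΥ z := (hfΥ z).symm
      _ ≤ Υ * Real.exp (-z) := hf_le z
  -- integrability
  have hI : ∀ Q : Polynomial ℝ, IntegrableOn (fun z => Q.eval z * fΥ z) (Ioi (0:ℝ)) :=
    fun Q => integrable_poly_mul' Υ hΥ Q fΥ hcontf hbf
  have hI' : ∀ Q : Polynomial ℝ, IntegrableOn (fun z => Q.eval z * deriv fΥ z) (Ioi (0:ℝ)) :=
    fun Q => integrable_poly_mul' Υ hΥ Q _ hcontd hd_le
  -- FTC key identity
  have hkey : ∀ P : Polynomial ℝ, P.eval 0 = 0 →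
      (∫ z in Ioi (0:ℝ),
        ((Polynomial.derivative P).eval z * fΥ z + P.eval z * deriv fΥ z)) = 0 := by
    intro P hP0
    have htend : Filter.Tendsto (fun z => P.eval z * fΥ z) Filter.atTop (nhds 0) := by
      have hb2 : ∀ z, ‖P.eval z * fΥ z‖ ≤ Υ * |P.eval z * Real.exp (-z)| := by
        intro z
        rw [Real.norm_eq_abs, abs_mul, abs_mul, abs_of_pos (Real.exp_pos _)]
        calc |P.eval z| * |fΥ z| ≤ |P.eval z| * (Υ * Real.exp (-z)) :=
              mul_le_mul_of_nonneg_left (hbf z) (abs_nonneg _)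
          _ = Υ * (|P.eval z| * Real.exp (-z)) := by ring
      have hg : Filter.Tendsto (fun z => Υ * |P.eval z * Real.exp (-z)|)
          Filter.atTop (nhds 0) := by
        have h := (tendsto_poly_mul_exp_neg' P one_pos).congr
          (fun z => by rw [one_mul])
        have h2 := h.abs.const_mul Υ
        simpa using h2
      exact squeeze_zero_norm hb2 hg
    have hmain := integral_Ioi_of_hasDerivAt_of_tendsto
      (f := fun z => P.eval z * fΥ z)
      (f' := fun z => (Polynomial.derivative P).eval z * fΥ z + P.eval z * deriv fΥ z)
      (a := 0) (m := 0)
      ((P.continuous.mul hcontf).continuousWithinAt)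
      (fun x _ => by
        simp only [hderiv_eq x]; exact (P.hasDerivAt x).mul (hdf x))
      ((hI (Polynomial.derivative P)).add (hI' P))
      htend
    simpa [hP0] using hmain
  -- Part (i)
  have part1 : ∀ p q : Polynomial ℝ,
      (∫ z in Ioi (0:ℝ), z * deriv fΥ z * p.eval z * q.eval z * z ^ 2)
        + (∫ z in Ioi (0:ℝ),
            (z * (Polynomial.derivative p).eval z) * q.eval z * w z)
      = -3 * (∫ z in Ioi (0:ℝ), p.eval z * q.eval z * w z)
        - ∫ z in Ioi (0:ℝ),
            p.eval z * (z * (Polynomial.derivative q).eval z) * w z := by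
    intro p q
    have hP0 : (X ^ 3 * p * q : Polynomial ℝ).eval 0 = 0 := by simp
    have h0 := hkey (X ^ 3 * p * q) hP0
    -- rewrite the FTC integrand as a sum of four pieces
    have hsplit : (∫ z in Ioi (0:ℝ),
          ((Polynomial.derivative (X ^ 3 * p * q)).eval z * fΥ z
            + (X ^ 3 * p * q : Polynomial ℝ).eval z * deriv fΥ z))
        = (∫ z in Ioi (0:ℝ), (X ^ 3 * p * q : Polynomial ℝ).eval z * deriv fΥ z)
          + ((∫ z in Ioi (0:ℝ),
              (X ^ 3 * Polynomial.derivative p * q : Polynomial ℝ).eval z * fΥ z)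
            + ((3:ℝ) * (∫ z in Ioi (0:ℝ),
                (X ^ 2 * p * q : Polynomial ℝ).eval z * fΥ z)
              + ∫ z in Ioi (0:ℝ),
                (X ^ 3 * p * Polynomial.derivative q : Polynomial ℝ).eval z * fΥ z)) := by
      have h4 : IntegrableOn (fun z => (3:ℝ) * ((X ^ 2 * p * q : Polynomial ℝ).eval z * fΥ z)
          + (X ^ 3 * p * Polynomial.derivative q : Polynomial ℝ).eval z * fΥ z) (Ioi (0:ℝ)) :=
        ((hI (X ^ 2 * p * q)).const_mul 3).add (hI (X ^ 3 * p * Polynomial.derivative q))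
      have h34 : IntegrableOn (fun z =>
          (X ^ 3 * Polynomial.derivative p * q : Polynomial ℝ).eval z * fΥ z
          + ((3:ℝ) * ((X ^ 2 * p * q : Polynomial ℝ).eval z * fΥ z)
            + (X ^ 3 * p * Polynomial.derivative q : Polynomial ℝ).eval z * fΥ z))
          (Ioi (0:ℝ)) := (hI (X ^ 3 * Polynomial.derivative p * q)).add h4
      calc (∫ z in Ioi (0:ℝ),
            ((Polynomial.derivative (X ^ 3 * p * q)).eval z * fΥ z
              + (X ^ 3 * p * q : Polynomial ℝ).eval z * deriv fΥ z))
          = ∫ z in Ioi (0:ℝ),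
              ((X ^ 3 * p * q : Polynomial ℝ).eval z * deriv fΥ z
              + ((X ^ 3 * Polynomial.derivative p * q : Polynomial ℝ).eval z * fΥ z
                + ((3:ℝ) * ((X ^ 2 * p * q : Polynomial ℝ).eval z * fΥ z)
                  + (X ^ 3 * p * Polynomial.derivative q : Polynomial ℝ).eval z * fΥ z))) := by
            apply MeasureTheory.integral_congr_ae
            filter_upwards with z
            simp only [Polynomial.derivative_mul, Polynomial.derivative_X_pow,
              Polynomial.eval_add, Polynomial.eval_mul, Polynomial.eval_pow,
              Polynomial.eval_X, Polynomial.eval_C, Polynomial.eval_natCast]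
            push_cast
            ring
        _ = (∫ z in Ioi (0:ℝ), (X ^ 3 * p * q : Polynomial ℝ).eval z * deriv fΥ z)
            + ∫ z in Ioi (0:ℝ),
              ((X ^ 3 * Polynomial.derivative p * q : Polynomial ℝ).eval z * fΥ z
                + ((3:ℝ) * ((X ^ 2 * p * q : Polynomial ℝ).eval z * fΥ z)
                  + (X ^ 3 * p * Polynomial.derivative q : Polynomial ℝ).eval z * fΥ z)) :=
            MeasureTheory.integral_add (hI' (X ^ 3 * p * q)) h34
        _ = (∫ z in Ioi (0:ℝ), (X ^ 3 * p * q : Polynomial ℝ).eval z * deriv fΥ z)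
            + ((∫ z in Ioi (0:ℝ),
                (X ^ 3 * Polynomial.derivative p * q : Polynomial ℝ).eval z * fΥ z)
              + ∫ z in Ioi (0:ℝ),
                ((3:ℝ) * ((X ^ 2 * p * q : Polynomial ℝ).eval z * fΥ z)
                  + (X ^ 3 * p * Polynomial.derivative q : Polynomial ℝ).eval z * fΥ z)) := by
            rw [MeasureTheory.integral_add (hI (X ^ 3 * Polynomial.derivative p * q)) h4]
        _ = (∫ z in Ioi (0:ℝ), (X ^ 3 * p * q : Polynomial ℝ).eval z * deriv fΥ z)
            + ((∫ z in Ioi (0:ℝ),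
                (X ^ 3 * Polynomial.derivative p * q : Polynomial ℝ).eval z * fΥ z)
              + ((∫ z in Ioi (0:ℝ),
                  (3:ℝ) * ((X ^ 2 * p * q : Polynomial ℝ).eval z * fΥ z))
                + ∫ z in Ioi (0:ℝ),
                  (X ^ 3 * p * Polynomial.derivative q : Polynomial ℝ).eval z * fΥ z)) := by
            rw [MeasureTheory.integral_add ((hI (X ^ 2 * p * q)).const_mul 3)
              (hI (X ^ 3 * p * Polynomial.derivative q))]
        _ = (∫ z in Ioi (0:ℝ), (X ^ 3 * p * q : Polynomial ℝ).eval z * deriv fΥ z)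
          + ((∫ z in Ioi (0:ℝ),
              (X ^ 3 * Polynomial.derivative p * q : Polynomial ℝ).eval z * fΥ z)
            + ((3:ℝ) * (∫ z in Ioi (0:ℝ),
                (X ^ 2 * p * q : Polynomial ℝ).eval z * fΥ z)
              + ∫ z in Ioi (0:ℝ),
                (X ^ 3 * p * Polynomial.derivative q : Polynomial ℝ).eval z * fΥ z)) := by
            rw [MeasureTheory.integral_const_mul]
    -- identify each piece with the goal integrals
    have e1 : (∫ z in Ioi (0:ℝ), z * deriv fΥ z * p.eval z * q.eval z * z ^ 2)
        = ∫ z in Ioi (0:ℝ), (X ^ 3 * p * q : Polynomial ℝ).eval z * deriv fΥ z := by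
      apply MeasureTheory.integral_congr_ae
      filter_upwards with z
      simp only [Polynomial.eval_mul, Polynomial.eval_pow, Polynomial.eval_X]
      ring
    have e2 : (∫ z in Ioi (0:ℝ), (z * (Polynomial.derivative p).eval z) * q.eval z * w z)
        = ∫ z in Ioi (0:ℝ),
            (X ^ 3 * Polynomial.derivative p * q : Polynomial ℝ).eval z * fΥ z := by
      apply MeasureTheory.integral_congr_ae
      filter_upwards with z
      simp only [hw]
      simp only [Polynomial.eval_mul, Polynomial.eval_pow, Polynomial.eval_X]
      ring
    have e3 : (∫ z in Ioi (0:ℝ), p.eval z * q.eval z * w z)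
        = ∫ z in Ioi (0:ℝ), (X ^ 2 * p * q : Polynomial ℝ).eval z * fΥ z := by
      apply MeasureTheory.integral_congr_ae
      filter_upwards with z
      simp only [hw]
      simp only [Polynomial.eval_mul, Polynomial.eval_pow, Polynomial.eval_X]
      ring
    have e4 : (∫ z in Ioi (0:ℝ), p.eval z * (z * (Polynomial.derivative q).eval z) * w z)
        = ∫ z in Ioi (0:ℝ),
            (X ^ 3 * p * Polynomial.derivative q : Polynomial ℝ).eval z * fΥ z := by
      apply MeasureTheory.integral_congr_ae
      filter_upwards with z
      simp only [hw]
      simp only [Polynomial.eval_mul, Polynomial.eval_pow, Polynomial.eval_X]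
      ring
    rw [e1, e2, e3, e4]
    rw [hsplit] at h0
    linarith
  refine ⟨part1, ?_, ?_⟩
  · -- Part (ii)
    intro k i
    rw [hA]
    have e : (∫ z in Ioi (0:ℝ),
          (z / fΥ z * deriv fΥ z * (ψ i).eval z) * (ψ k).eval z * w z)
        = ∫ z in Ioi (0:ℝ),
            z * deriv fΥ z * (ψ i).eval z * (ψ k).eval z * z ^ 2 := by
      apply MeasureTheory.integral_congr_ae
      filter_upwards with z
      simp only [hw]
      field_simp [(hfpos z).ne']
    rw [e]
    exact part1 (ψ i) (ψ k)
  · -- Part (iii): lower triangularity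
    -- auxiliary: integral over ψ i against polynomials of degree < n ≤ i vanishes
    have hzero : ∀ n : ℕ, ∀ r : Polynomial ℝ, r.degree < (n : ℕ) → ∀ i : ℕ, n ≤ i →
        (∫ z in Ioi (0:ℝ), (ψ i).eval z * r.eval z * w z) = 0 := by
      intro n
      induction n with
      | zero =>
        intro r hr i hi
        have hr0 : r = 0 := by
          rw [← Polynomial.degree_eq_bot]
          simpa using hr
        simp [hr0]
      | succ n ih =>
        intro r hr i hi
        by_cases hlt : r.degree < (n : ℕ)
        · exact ih r hlt i (by omega)
        · have hrne : r ≠ 0 := by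
            intro h
            rw [h, Polynomial.degree_zero] at hlt
            exact hlt (WithBot.bot_lt_coe n)
          have hrd := Polynomial.degree_eq_natDegree hrne
          have h1 : r.natDegree < n + 1 := by
            rw [hrd] at hr
            exact_mod_cast hr
          have h2 : ¬ r.natDegree < n := by
            intro h
            apply hlt
            rw [hrd]
            exact_mod_cast h
          have hnd : r.natDegree = n := by omega
          have hdr : r.degree = (n : ℕ) := by rw [hrd, hnd]
          have hψn : (ψ n).degree = (n : ℕ) := hdeg n
          have hψne : ψ n ≠ 0 := by
            intro h
            rw [h, Polynomial.degree_zero] at hψn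
            exact absurd hψn.symm (by simp)
          have hlc : (ψ n).leadingCoeff ≠ 0 := Polynomial.leadingCoeff_ne_zero.mpr hψne
          set c : ℝ := r.leadingCoeff / (ψ n).leadingCoeff with hc
          have hcne : c ≠ 0 :=
            div_ne_zero (Polynomial.leadingCoeff_ne_zero.mpr hrne) hlc
          have hdegsub : (r - Polynomial.C c * ψ n).degree < (n : ℕ) := by
            rw [← hdr]
            apply Polynomial.degree_sub_lt _ hrne
            · rw [Polynomial.leadingCoeff_mul, Polynomial.leadingCoeff_C, hc,
                div_mul_cancel₀ _ hlc]
            · rw [Polynomial.degree_mul, Polynomial.degree_C hcne, hdr, hψn, zero_add]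
          have hint1 : IntegrableOn
              (fun z => (ψ i).eval z * (r - Polynomial.C c * ψ n).eval z * w z)
              (Ioi (0:ℝ)) := by
            apply (hI (ψ i * (r - Polynomial.C c * ψ n) * X ^ 2)).congr_fun _
              measurableSet_Ioi
            intro z _
            simp only [hw, Polynomial.eval_mul, Polynomial.eval_pow, Polynomial.eval_X]
            ring
          have hint2 : IntegrableOn
              (fun z => c * ((ψ i).eval z * (ψ n).eval z * w z)) (Ioi (0:ℝ)) := by
            apply ((hI (ψ i * ψ n * X ^ 2)).congr_fun _ measurableSet_Ioi).const_mul c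
            intro z _
            simp only [hw, Polynomial.eval_mul, Polynomial.eval_pow, Polynomial.eval_X]
            ring
          have hsplit : (∫ z in Ioi (0:ℝ), (ψ i).eval z * r.eval z * w z)
              = (∫ z in Ioi (0:ℝ), (ψ i).eval z * (r - Polynomial.C c * ψ n).eval z * w z)
                + c * ∫ z in Ioi (0:ℝ), (ψ i).eval z * (ψ n).eval z * w z := by
            calc (∫ z in Ioi (0:ℝ), (ψ i).eval z * r.eval z * w z)
                = ∫ z in Ioi (0:ℝ), ((ψ i).eval z * (r - Polynomial.C c * ψ n).eval z * w z
                    + c * ((ψ i).eval z * (ψ n).eval z * w z)) := by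
                  apply MeasureTheory.integral_congr_ae
                  filter_upwards with z
                  simp only [Polynomial.eval_sub, Polynomial.eval_mul, Polynomial.eval_C]
                  ring
              _ = (∫ z in Ioi (0:ℝ), (ψ i).eval z * (r - Polynomial.C c * ψ n).eval z * w z)
                  + ∫ z in Ioi (0:ℝ), c * ((ψ i).eval z * (ψ n).eval z * w z) :=
                MeasureTheory.integral_add hint1 hint2
              _ = (∫ z in Ioi (0:ℝ), (ψ i).eval z * (r - Polynomial.C c * ψ n).eval z * w z)
                  + c * ∫ z in Ioi (0:ℝ), (ψ i).eval z * (ψ n).eval z * w z := by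
                rw [MeasureTheory.integral_const_mul]
          rw [hsplit, ih _ hdegsub i (by omega), horth i n,
            if_neg (by omega : ¬ i = n)]
          ring
    intro k i hki
    have h2' : A k i
        = -3 * (∫ z in Ioi (0:ℝ), (ψ i).eval z * (ψ k).eval z * w z)
          - ∫ z in Ioi (0:ℝ),
              (ψ i).eval z * (z * (Polynomial.derivative (ψ k)).eval z) * w z := by
      rw [hA]
      have e : (∫ z in Ioi (0:ℝ),
            (z / fΥ z * deriv fΥ z * (ψ i).eval z) * (ψ k).eval z * w z)
          = ∫ z in Ioi (0:ℝ),
              z * deriv fΥ z * (ψ i).eval z * (ψ k).eval z * z ^ 2 := by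
        apply MeasureTheory.integral_congr_ae
        filter_upwards with z
        simp only [hw]
        field_simp [(hfpos z).ne']
      rw [e]
      exact part1 (ψ i) (ψ k)
    rw [h2', horth i k, if_neg (by omega : ¬ i = k)]
    have hX : (X * Polynomial.derivative (ψ k) : Polynomial ℝ).degree < (i : ℕ) := by
      by_cases hd0 : Polynomial.derivative (ψ k) = 0
      · rw [hd0, mul_zero, Polynomial.degree_zero]
        exact WithBot.bot_lt_coe i
      · have hk0 : (ψ k).natDegree = k := Polynomial.natDegree_eq_of_degree_eq_some (hdeg k)
        have hkpos : k ≠ 0 := by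
          intro h
          apply hd0
          have : (ψ k).natDegree = 0 := by rw [hk0, h]
          rw [Polynomial.eq_C_of_natDegree_eq_zero this]
          exact Polynomial.derivative_C
        have hnd : (Polynomial.derivative (ψ k)).natDegree < k := by
          have := Polynomial.natDegree_derivative_lt (p := ψ k) (by rw [hk0]; exact hkpos)
          rwa [hk0] at this
        have hXd : (X * Polynomial.derivative (ψ k) : Polynomial ℝ).natDegree
            = 1 + (Polynomial.derivative (ψ k)).natDegree := by
          rw [Polynomial.natDegree_mul Polynomial.X_ne_zero hd0, Polynomial.natDegree_X]
        calc (X * Polynomial.derivative (ψ k) : Polynomial ℝ).degree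
            ≤ ((X * Polynomial.derivative (ψ k) : Polynomial ℝ).natDegree : WithBot ℕ) :=
              Polynomial.degree_le_natDegree
          _ < ((i : ℕ) : WithBot ℕ) := by
              rw [hXd]
              exact_mod_cast (by omega : 1 + (Polynomial.derivative (ψ k)).natDegree < i)
    have e2 : (∫ z in Ioi (0:ℝ),
          (ψ i).eval z * (z * (Polynomial.derivative (ψ k)).eval z) * w z)
        = ∫ z in Ioi (0:ℝ),
            (ψ i).eval z * (X * Polynomial.derivative (ψ k) : Polynomial ℝ).eval z * w z := by
      apply MeasureTheory.integral_congr_ae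
      filter_upwards with z
      simp only [Polynomial.eval_mul, Polynomial.eval_X]
    rw [e2, hzero i _ hX i le_rfl]
    ring
end

section
/- Let Υ > 0 vary over an open interval, f_Υ(z) = 1/(Υ⁻¹eᶻ + 1), w_Υ(z) = z²f_Υ(z), and ⟨·,·⟩_Υ the weighted inner product on (0,∞). Let (ψ̂_i(Υ,·))_i be polynomials of degree i with C¹-in-Υ coefficients, orthonormal with respect to w_Υ, and assume differentiation under the integral sign is valid for polynomial families. Then the matrix B^k_i = Υ(⟨(1/f_Υ)(∂_Υ f_Υ) ψ̂_i, ψ̂_k⟩_Υ + ⟨∂_Υ ψ̂_i, ψ̂_k⟩_Υ) satisfies B^k_i = −Υ⟨ψ̂_i, ∂_Υ ψ̂_k⟩_Υ; in particular B^k_i = 0 whenever k < i (B is lower triangular), since ∂_Υψ̂_k is a polynomial of degree at most k. -/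
open MeasureTheory Real Set Finset

/-- A family `p(Υ,z)` which is, for each parameter value `Υ ∈ U`, a polynomial in `z` (of
degree at most some fixed `n`) whose coefficients are `C¹` functions of `Υ` on `U`. -/
def IsC1OnPolyFamily (U : Set ℝ) (p : ℝ → ℝ → ℝ) : Prop :=
  ∃ (n : ℕ) (c : ℕ → ℝ → ℝ), (∀ k, ContDiffOn ℝ 1 (c k) U) ∧
    ∀ u ∈ U, ∀ z : ℝ, p u z = ∑ k ∈ range (n + 1), c k u * z ^ k

/-- A family `p(Υ,z)` which is, for each `Υ ∈ U`, a polynomial in `z` of fixed degree exactly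
`i` whose coefficients are `C¹` functions of `Υ` on `U`. -/
def IsC1OnPolyFamilyDeg (U : Set ℝ) (i : ℕ) (p : ℝ → ℝ → ℝ) : Prop :=
  ∃ c : ℕ → ℝ → ℝ, (∀ k, ContDiffOn ℝ 1 (c k) U) ∧ (∀ u ∈ U, c i u ≠ 0) ∧
    ∀ u ∈ U, ∀ z : ℝ, p u z = ∑ k ∈ range (i + 1), c k u * z ^ k

lemma int_pow_exp (m : ℕ) : IntegrableOn (fun z : ℝ => z ^ m * Real.exp (-z)) (Ioi 0) := by
  have h := Real.GammaIntegral_convergent (s := m + 1) (by positivity)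
  refine h.congr_fun (fun x hx => ?_) measurableSet_Ioi
  simp only [add_sub_cancel_right, Real.rpow_natCast]
  ring

lemma int_of_bound {g : ℝ → ℝ} (hg : ContinuousOn g (Ioi 0)) (C : ℝ) (m : ℕ)
    (hb : ∀ z ∈ Ioi (0:ℝ), |g z| ≤ C * (z ^ m * Real.exp (-z))) :
    IntegrableOn g (Ioi 0) := by
  refine Integrable.mono' ((int_pow_exp m).const_mul C) (hg.aestronglyMeasurable measurableSet_Ioi) ?_
  filter_upwards [ae_restrict_mem measurableSet_Ioi] with z hz
  simpa [mul_assoc] using hb z hz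

lemma den_pos (u z : ℝ) (hu : 0 < u) : 0 < u⁻¹ * Real.exp z + 1 := by positivity

lemma hasDerivAt_f (u z : ℝ) (hu : 0 < u) :
    HasDerivAt (fun v : ℝ => 1 / (v⁻¹ * Real.exp z + 1))
      ((u ^ 2)⁻¹ * Real.exp z / (u⁻¹ * Real.exp z + 1) ^ 2) u := by
  have hg : HasDerivAt (fun v : ℝ => v⁻¹ * Real.exp z + 1) (-(u ^ 2)⁻¹ * Real.exp z) u :=
    ((hasDerivAt_inv hu.ne').mul_const _).add_const 1
  have := hg.inv (den_pos u z hu).ne'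
  simp only [one_div]
  exact this.congr_deriv (by ring)

lemma int_pow_w (u : ℝ) (hu : 0 < u) (m : ℕ) :
    IntegrableOn (fun z : ℝ => z ^ m * (z ^ 2 * (1 / (u⁻¹ * Real.exp z + 1)))) (Ioi 0) := by
  refine int_of_bound ?_ u (m + 2) fun z hz => ?_
  · have : Continuous fun z : ℝ => z ^ m * (z ^ 2 * (1 / (u⁻¹ * Real.exp z + 1))) := by
      fun_prop (disch := intro z; exact (den_pos u z hu).ne')
    exact this.continuousOn
  · have hz0 : (0:ℝ) < z := hz
    have h1 : 1 / (u⁻¹ * Real.exp z + 1) ≤ u * Real.exp (-z) := by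
      rw [div_le_iff₀ (den_pos u z hu), Real.exp_neg]
      have h2 : u * (Real.exp z)⁻¹ * (u⁻¹ * Real.exp z) = 1 := by
        field_simp
      nlinarith [Real.exp_pos z, mul_pos hu (inv_pos.mpr (Real.exp_pos z))]
    have habs : |z ^ m * (z ^ 2 * (1 / (u⁻¹ * Real.exp z + 1)))| =
        z ^ m * (z ^ 2 * (1 / (u⁻¹ * Real.exp z + 1))) := by
      rw [abs_of_nonneg]; positivity
    rw [habs]
    have : z ^ m * (z ^ 2 * (1 / (u⁻¹ * Real.exp z + 1))) ≤ z ^ m * (z ^ 2 * (u * Real.exp (-z))) := by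
      have : (0:ℝ) ≤ z ^ m * z ^ 2 := by positivity
      nlinarith [pow_pos hz0 m, pow_pos hz0 2]
    calc z ^ m * (z ^ 2 * (1 / (u⁻¹ * Real.exp z + 1)))
        ≤ z ^ m * (z ^ 2 * (u * Real.exp (-z))) := this
      _ = u * (z ^ (m + 2) * Real.exp (-z)) := by ring

lemma int_pow_df (u : ℝ) (hu : 0 < u) (m : ℕ) :
    IntegrableOn (fun z : ℝ =>
      z ^ m * (z ^ 2 * ((u ^ 2)⁻¹ * Real.exp z / (u⁻¹ * Real.exp z + 1) ^ 2))) (Ioi 0) := by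
  refine int_of_bound ?_ 1 (m + 2) fun z hz => ?_
  · have : Continuous fun z : ℝ =>
        z ^ m * (z ^ 2 * ((u ^ 2)⁻¹ * Real.exp z / (u⁻¹ * Real.exp z + 1) ^ 2)) := by
      fun_prop (disch := intro z; exact (pow_ne_zero 2 (den_pos u z hu).ne'))
    exact this.continuousOn
  · have hz0 : (0:ℝ) < z := hz
    have hden := den_pos u z hu
    have h1 : (u ^ 2)⁻¹ * Real.exp z / (u⁻¹ * Real.exp z + 1) ^ 2 ≤ Real.exp (-z) := by
      rw [div_le_iff₀ (by positivity), Real.exp_neg]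
      have key : Real.exp (-z) * (u⁻¹ * Real.exp z) ^ 2 = (u ^ 2)⁻¹ * Real.exp z := by
        rw [Real.exp_neg]; field_simp
      have h2 : (u⁻¹ * Real.exp z) ^ 2 ≤ (u⁻¹ * Real.exp z + 1) ^ 2 := by
        have : (0:ℝ) < u⁻¹ * Real.exp z := by positivity
        nlinarith
      calc (u ^ 2)⁻¹ * Real.exp z = Real.exp (-z) * (u⁻¹ * Real.exp z) ^ 2 := key.symm
        _ ≤ Real.exp (-z) * (u⁻¹ * Real.exp z + 1) ^ 2 := by
            have := (Real.exp_pos (-z)).le; nlinarith [Real.exp_pos (-z)]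
        _ = (Real.exp z)⁻¹ * (u⁻¹ * Real.exp z + 1) ^ 2 := by rw [Real.exp_neg]
    have habs : |z ^ m * (z ^ 2 * ((u ^ 2)⁻¹ * Real.exp z / (u⁻¹ * Real.exp z + 1) ^ 2))| =
        z ^ m * (z ^ 2 * ((u ^ 2)⁻¹ * Real.exp z / (u⁻¹ * Real.exp z + 1) ^ 2)) := by
      rw [abs_of_nonneg]; positivity
    rw [habs, one_mul]
    calc z ^ m * (z ^ 2 * ((u ^ 2)⁻¹ * Real.exp z / (u⁻¹ * Real.exp z + 1) ^ 2))
        ≤ z ^ m * (z ^ 2 * Real.exp (-z)) := by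
          have : (0:ℝ) ≤ z ^ m * z ^ 2 := by positivity
          nlinarith [pow_pos hz0 m, pow_pos hz0 2]
      _ = z ^ (m + 2) * Real.exp (-z) := by ring

lemma int_poly_mul {W : ℝ → ℝ} (hW : ∀ m : ℕ, IntegrableOn (fun z : ℝ => z ^ m * W z) (Ioi 0))
    (P : Polynomial ℝ) : IntegrableOn (fun z : ℝ => P.eval z * W z) (Ioi 0) := by
  have h : (fun z : ℝ => P.eval z * W z) =
      fun z => ∑ k ∈ range (P.natDegree + 1), P.coeff k * (z ^ k * W z) := by
    funext z
    rw [Polynomial.eval_eq_sum_range, Finset.sum_mul]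
    exact Finset.sum_congr rfl fun k _ => by ring
  rw [h]
  exact integrable_finset_sum _ fun k _ => (hW k).const_mul _

lemma psi_hasDeriv {U : Set ℝ} (hU : IsOpen U) {u : ℝ} (hu : u ∈ U)
    {p : ℝ → ℝ → ℝ} {n : ℕ} {c : ℕ → ℝ → ℝ}
    (hc : ∀ k, ContDiffOn ℝ 1 (c k) U)
    (hrep : ∀ v ∈ U, ∀ z : ℝ, p v z = ∑ k ∈ range (n + 1), c k v * z ^ k)
    (z : ℝ) :
    HasDerivAt (fun v => p v z) (∑ k ∈ range (n + 1), deriv (c k) u * z ^ k) u := by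
  have hd : ∀ k, HasDerivAt (c k) (deriv (c k) u) u := fun k =>
    (((hc k).differentiableOn one_ne_zero).differentiableAt (hU.mem_nhds hu)).hasDerivAt
  have h1 : HasDerivAt (fun v => ∑ k ∈ range (n + 1), c k v * z ^ k)
      (∑ k ∈ range (n + 1), deriv (c k) u * z ^ k) u :=
    HasDerivAt.fun_sum fun k _ => (hd k).mul_const _
  exact h1.congr_of_eventuallyEq
    (by filter_upwards [hU.mem_nhds hu] with v hv using hrep v hv z)

/-- The matrix `B^k_i = Υ(⟨(1/f_Υ)(∂_Υf_Υ)ψ̂_i, ψ̂_k⟩_Υ + ⟨∂_Υψ̂_i, ψ̂_k⟩_Υ)` of the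
chemical non-equilibrium spectral method satisfies `B^k_i = −Υ⟨ψ̂_i, ∂_Υψ̂_k⟩_Υ`; in
particular `B` is lower triangular. -/
theorem B_matrix_identity_and_lower_triangularity
    (U : Set ℝ) (hU : IsOpen U) (hUpos : U ⊆ Ioi (0:ℝ))
    (fΥ w : ℝ → ℝ → ℝ)
    (hfΥ : ∀ u z, fΥ u z = 1 / (u⁻¹ * Real.exp z + 1))
    (hw : ∀ u z, w u z = z ^ 2 * fΥ u z)
    (ψ : ℕ → ℝ → ℝ → ℝ)
    (hψ : ∀ i, IsC1OnPolyFamilyDeg U i (ψ i))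
    (horth : ∀ i j, ∀ u ∈ U,
      (∫ z in Ioi (0:ℝ), ψ i u z * ψ j u z * w u z) = if i = j then 1 else 0)
    (hDUIS : ∀ p q : ℝ → ℝ → ℝ, IsC1OnPolyFamily U p → IsC1OnPolyFamily U q →
      ∀ u ∈ U, HasDerivAt (fun v => ∫ z in Ioi (0:ℝ), p v z * q v z * w v z)
        (∫ z in Ioi (0:ℝ), deriv (fun v => p v z * q v z * w v z) u) u)
    (B : ℕ → ℕ → ℝ → ℝ)
    (hB : ∀ k i, ∀ u ∈ U, B k i u =
      u * ((∫ z in Ioi (0:ℝ),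
              (deriv (fun v => fΥ v z) u / fΥ u z * ψ i u z) * ψ k u z * w u z)
        + ∫ z in Ioi (0:ℝ), deriv (fun v => ψ i v z) u * ψ k u z * w u z)) :
    ∀ u ∈ U, ∀ k i : ℕ,
      B k i u = -u * (∫ z in Ioi (0:ℝ), ψ i u z * deriv (fun v => ψ k v z) u * w u z)
      ∧ (k < i → B k i u = 0) := by
  intro u hu k i
  have hu0 : 0 < u := hUpos hu
  obtain ⟨ci, hci, hcine, hrepi⟩ := hψ i
  obtain ⟨ck, hck, hckne, hrepk⟩ := hψ k
  have hwz : ∀ v z : ℝ, w v z = z ^ 2 * (1 / (v⁻¹ * Real.exp z + 1)) := fun v z => by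
    rw [hw, hfΥ]
  have hfd : ∀ z : ℝ, deriv (fun v => fΥ v z) u =
      (u ^ 2)⁻¹ * Real.exp z / (u⁻¹ * Real.exp z + 1) ^ 2 := fun z => by
    have h : (fun v => fΥ v z) = fun v => 1 / (v⁻¹ * Real.exp z + 1) := funext fun v => hfΥ v z
    rw [h]; exact (hasDerivAt_f u z hu0).deriv
  -- ψ derivatives
  set ψ'i : ℝ → ℝ := fun z => ∑ m ∈ range (i + 1), deriv (ci m) u * z ^ m with hψ'i
  set ψ'k : ℝ → ℝ := fun z => ∑ m ∈ range (k + 1), deriv (ck m) u * z ^ m with hψ'k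
  have hdi : ∀ z, HasDerivAt (fun v => ψ i v z) (ψ'i z) u := fun z =>
    psi_hasDeriv hU hu hci hrepi z
  have hdk : ∀ z, HasDerivAt (fun v => ψ k v z) (ψ'k z) u := fun z =>
    psi_hasDeriv hU hu hck hrepk z
  have hdi' : ∀ z, deriv (fun v => ψ i v z) u = ψ'i z := fun z => (hdi z).deriv
  have hdk' : ∀ z, deriv (fun v => ψ k v z) u = ψ'k z := fun z => (hdk z).deriv
  -- integrability infrastructure
  have hWint : ∀ m : ℕ, IntegrableOn (fun z : ℝ => z ^ m * w u z) (Ioi 0) := fun m =>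
    (int_pow_w u hu0 m).congr_fun (fun z _ => by rw [hwz]) measurableSet_Ioi
  set W3 : ℝ → ℝ := fun z => z ^ 2 * ((u ^ 2)⁻¹ * Real.exp z / (u⁻¹ * Real.exp z + 1) ^ 2)
    with hW3
  have hW3int : ∀ m : ℕ, IntegrableOn (fun z : ℝ => z ^ m * W3 z) (Ioi 0) := int_pow_df u hu0
  have hInt : ∀ P : Polynomial ℝ, IntegrableOn (fun z : ℝ => P.eval z * w u z) (Ioi 0) :=
    int_poly_mul hWint
  have hInt3 : ∀ P : Polynomial ℝ, IntegrableOn (fun z : ℝ => P.eval z * W3 z) (Ioi 0) :=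
    int_poly_mul hW3int
  -- polynomials representing ψ i u, ψ k u, ψ'i, ψ'k
  set Qi : Polynomial ℝ := ∑ m ∈ range (i + 1), Polynomial.C (ci m u) * Polynomial.X ^ m
  set Qk : Polynomial ℝ := ∑ m ∈ range (k + 1), Polynomial.C (ck m u) * Polynomial.X ^ m
  set Q'i : Polynomial ℝ := ∑ m ∈ range (i + 1), Polynomial.C (deriv (ci m) u) * Polynomial.X ^ m
  set Q'k : Polynomial ℝ := ∑ m ∈ range (k + 1), Polynomial.C (deriv (ck m) u) * Polynomial.X ^ m
  have hQi : ∀ z : ℝ, ψ i u z = Qi.eval z := fun z => by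
    rw [hrepi u hu z]; simp [Qi, Polynomial.eval_finset_sum]
  have hQk : ∀ z : ℝ, ψ k u z = Qk.eval z := fun z => by
    rw [hrepk u hu z]; simp [Qk, Polynomial.eval_finset_sum]
  have hQ'i : ∀ z : ℝ, ψ'i z = Q'i.eval z := fun z => by
    simp [ψ'i, Q'i, Polynomial.eval_finset_sum]
  have hQ'k : ∀ z : ℝ, ψ'k z = Q'k.eval z := fun z => by
    simp [ψ'k, Q'k, Polynomial.eval_finset_sum]
  -- integrable terms
  have hT1 : IntegrableOn (fun z : ℝ => ψ'i z * ψ k u z * w u z) (Ioi 0) :=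
    (hInt (Q'i * Qk)).congr_fun
      (fun z _ => by beta_reduce; rw [Polynomial.eval_mul, ← hQ'i, ← hQk]) measurableSet_Ioi
  have hT2 : IntegrableOn (fun z : ℝ => ψ i u z * ψ'k z * w u z) (Ioi 0) :=
    (hInt (Qi * Q'k)).congr_fun
      (fun z _ => by beta_reduce; rw [Polynomial.eval_mul, ← hQi, ← hQ'k]) measurableSet_Ioi
  have hT3 : IntegrableOn (fun z : ℝ => ψ i u z * ψ k u z * W3 z) (Ioi 0) :=
    (hInt3 (Qi * Qk)).congr_fun
      (fun z _ => by beta_reduce; rw [Polynomial.eval_mul, ← hQi, ← hQk]) measurableSet_Ioi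
  have hintj : ∀ j : ℕ, IntegrableOn (fun z : ℝ => ψ i u z * z ^ j * w u z) (Ioi 0) := fun j =>
    (hInt (Qi * Polynomial.X ^ j)).congr_fun
      (fun z _ => by beta_reduce; rw [Polynomial.eval_mul, Polynomial.eval_pow, Polynomial.eval_X, ← hQi])
      measurableSet_Ioi
  -- derivative of the product w.r.t. u
  have hw_d : ∀ z : ℝ, HasDerivAt (fun v => w v z) (W3 z) u := fun z => by
    have h : (fun v => w v z) = fun v => z ^ 2 * (1 / (v⁻¹ * Real.exp z + 1)) :=
      funext fun v => hwz v z
    rw [h]; exact (hasDerivAt_f u z hu0).const_mul _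
  have hprod : ∀ z : ℝ, deriv (fun v => ψ i v z * ψ k v z * w v z) u =
      (ψ'i z * ψ k u z + ψ i u z * ψ'k z) * w u z + ψ i u z * ψ k u z * W3 z := fun z =>
    (((hdi z).mul (hdk z)).mul (hw_d z)).deriv
  -- derivative of orthonormality relation is zero
  have hDer := hDUIS (ψ i) (ψ k) ⟨i, ci, hci, hrepi⟩ ⟨k, ck, hck, hrepk⟩ u hu
  have hzero : (∫ z in Ioi (0:ℝ), deriv (fun v => ψ i v z * ψ k v z * w v z) u) = 0 := by
    have h0 : HasDerivAt (fun v => ∫ z in Ioi (0:ℝ), ψ i v z * ψ k v z * w v z) 0 u := by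
      refine (hasDerivAt_const u (if i = k then (1:ℝ) else 0)).congr_of_eventuallyEq ?_
      filter_upwards [hU.mem_nhds hu] with v hv using horth i k v hv
    exact hDer.unique h0
  have hsplit : (∫ z in Ioi (0:ℝ), deriv (fun v => ψ i v z * ψ k v z * w v z) u) =
      ((∫ z in Ioi (0:ℝ), ψ'i z * ψ k u z * w u z)
        + ∫ z in Ioi (0:ℝ), ψ i u z * ψ'k z * w u z)
      + ∫ z in Ioi (0:ℝ), ψ i u z * ψ k u z * W3 z := by
    have h1 : (∫ z in Ioi (0:ℝ), deriv (fun v => ψ i v z * ψ k v z * w v z) u)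
        = ∫ z in Ioi (0:ℝ), ((ψ'i z * ψ k u z * w u z + ψ i u z * ψ'k z * w u z)
            + ψ i u z * ψ k u z * W3 z) :=
      setIntegral_congr_fun measurableSet_Ioi fun z _ => by rw [hprod z]; ring
    have hT12 : IntegrableOn
        (fun z : ℝ => ψ'i z * ψ k u z * w u z + ψ i u z * ψ'k z * w u z) (Ioi 0) := hT1.add hT2
    rw [h1, integral_add hT12 hT3, integral_add hT1 hT2]
  have hkey : (∫ z in Ioi (0:ℝ), ψ i u z * ψ k u z * W3 z)
      + (∫ z in Ioi (0:ℝ), ψ'i z * ψ k u z * w u z)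
      = -(∫ z in Ioi (0:ℝ), ψ i u z * ψ'k z * w u z) := by
    rw [hsplit] at hzero; linarith
  -- rewrite B
  have hBval : B k i u = -u * (∫ z in Ioi (0:ℝ), ψ i u z * ψ'k z * w u z) := by
    rw [hB k i u hu]
    have e1 : (∫ z in Ioi (0:ℝ),
        (deriv (fun v => fΥ v z) u / fΥ u z * ψ i u z) * ψ k u z * w u z)
        = ∫ z in Ioi (0:ℝ), ψ i u z * ψ k u z * W3 z := by
      refine setIntegral_congr_fun measurableSet_Ioi fun z _ => ?_
      rw [hfd z, hfΥ, hwz, hW3]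
      have hden := den_pos u z hu0
      field_simp
    have e2 : (∫ z in Ioi (0:ℝ), deriv (fun v => ψ i v z) u * ψ k u z * w u z)
        = ∫ z in Ioi (0:ℝ), ψ'i z * ψ k u z * w u z := by
      refine setIntegral_congr_fun measurableSet_Ioi fun z _ => by rw [hdi' z]
    rw [e1, e2, hkey]; ring
  have hRHS : (∫ z in Ioi (0:ℝ), ψ i u z * deriv (fun v => ψ k v z) u * w u z)
      = ∫ z in Ioi (0:ℝ), ψ i u z * ψ'k z * w u z :=
    setIntegral_congr_fun measurableSet_Ioi fun z _ => by rw [hdk' z]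
  constructor
  · rw [hBval, hRHS]
  · intro hki
    -- moments vanish
    have hmom : ∀ m : ℕ, m < i → (∫ z in Ioi (0:ℝ), ψ i u z * z ^ m * w u z) = 0 := by
      intro m
      induction m using Nat.strong_induction_on with
      | _ m IH =>
        intro hmi
        obtain ⟨cm, hcm, hcmne, hrepm⟩ := hψ m
        have hexp : ∀ z : ℝ, ψ i u z * ψ m u z * w u z
            = ∑ j ∈ range (m + 1), cm j u * (ψ i u z * z ^ j * w u z) := fun z => by
          rw [hrepm u hu z, Finset.mul_sum, Finset.sum_mul]
          exact Finset.sum_congr rfl fun j _ => by ring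
        have h0 : (0:ℝ) = ∑ j ∈ range (m + 1),
            cm j u * ∫ z in Ioi (0:ℝ), ψ i u z * z ^ j * w u z := by
          have horth0 := horth i m u hu
          rw [if_neg (by omega : ¬ i = m)] at horth0
          calc (0:ℝ) = ∫ z in Ioi (0:ℝ), ψ i u z * ψ m u z * w u z := horth0.symm
            _ = ∫ z in Ioi (0:ℝ), ∑ j ∈ range (m + 1),
                  cm j u * (ψ i u z * z ^ j * w u z) :=
                setIntegral_congr_fun measurableSet_Ioi fun z _ => hexp z
            _ = ∑ j ∈ range (m + 1), ∫ z in Ioi (0:ℝ),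
                  cm j u * (ψ i u z * z ^ j * w u z) :=
                integral_finset_sum _ fun j _ => (hintj j).const_mul _
            _ = ∑ j ∈ range (m + 1),
                  cm j u * ∫ z in Ioi (0:ℝ), ψ i u z * z ^ j * w u z := by
                exact Finset.sum_congr rfl fun j _ => integral_const_mul _ _
        rw [Finset.sum_range_succ, Finset.sum_eq_zero (fun j hj => by
          rw [IH j (mem_range.mp hj) (lt_trans (mem_range.mp hj) hmi)]; ring),
          zero_add] at h0
        rcases mul_eq_zero.mp h0.symm with h | h
        · exact absurd h (hcmne u hu)
        · exact h
    have hT2zero : (∫ z in Ioi (0:ℝ), ψ i u z * ψ'k z * w u z) = 0 := by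
      have hexp2 : ∀ z : ℝ, ψ i u z * ψ'k z * w u z
          = ∑ j ∈ range (k + 1), deriv (ck j) u * (ψ i u z * z ^ j * w u z) := fun z => by
        rw [hψ'k, Finset.mul_sum, Finset.sum_mul]
        exact Finset.sum_congr rfl fun j _ => by ring
      calc (∫ z in Ioi (0:ℝ), ψ i u z * ψ'k z * w u z)
          = ∫ z in Ioi (0:ℝ), ∑ j ∈ range (k + 1),
              deriv (ck j) u * (ψ i u z * z ^ j * w u z) :=
            setIntegral_congr_fun measurableSet_Ioi fun z _ => hexp2 z
        _ = ∑ j ∈ range (k + 1), ∫ z in Ioi (0:ℝ),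
              deriv (ck j) u * (ψ i u z * z ^ j * w u z) :=
            integral_finset_sum _ fun j _ => (hintj j).const_mul _
        _ = 0 := Finset.sum_eq_zero fun j hj => by
            rw [integral_const_mul,
              hmom j (lt_of_lt_of_le (mem_range.mp hj) (Nat.lt_iff_add_one_le.mp hki)), mul_zero]
    rw [hBval, hT2zero, mul_zero]
end
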